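/- For all reals s > 0 and positive integers m and n, ∑_{k=0}^{n} (-1)^k C(n,k) (s/(s+k))^m = (n/s) · ∑_{k=0}^{m-1} ∑_{j=0}^{n-1} (-1)^j C(n-1,j) (s/(s+j+1))^{k+1}. -/

import Mathlib

open Finset

lemma key12 (s : ℝ) (hs : 0 < s) (n : ℕ) (hn : 1 ≤ n) (t : ℕ) :
    ∑ k ∈ range (n + 1), (-1 : ℝ) ^ k * (n.choose k : ℝ) * (s / (s + k)) ^ (t + 1)
    - ∑ k ∈ range (n + 1), (-1 : ℝ) ^ k * (n.choose k : ℝ) * (s / (s + k)) ^ t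
    = ((n : ℝ) / s) * ∑ j ∈ range n, (-1 : ℝ) ^ j * ((n - 1).choose j : ℝ) * (s / (s + j + 1)) ^ (t + 1) := by
  rw [← Finset.sum_sub_distrib, Finset.mul_sum, Finset.sum_range_succ']
  have h0 : ((-1 : ℝ) ^ 0 * (n.choose 0 : ℝ) * (s / (s + (0:ℕ))) ^ (t + 1)
      - (-1 : ℝ) ^ 0 * (n.choose 0 : ℝ) * (s / (s + (0:ℕ))) ^ t) = 0 := by
    simp [div_self hs.ne']
  rw [h0, add_zero]
  refine Finset.sum_congr rfl fun j hj => ?_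
  have hx : s + (j:ℝ) + 1 ≠ 0 := by positivity
  have hcast : (n : ℝ) * ((n - 1).choose j : ℝ) = (n.choose (j + 1) : ℝ) * ((j : ℝ) + 1) := by
    have := Nat.add_one_mul_choose_eq (n - 1) j
    rw [Nat.sub_add_cancel hn] at this
    exact_mod_cast this
  push_cast
  rw [pow_succ]
  field_simp
  rw [hcast, show s + ((j:ℝ)+1) = s + j + 1 by ring]
  have hx' : s / (s + j + 1) * (s + j + 1) = s := div_mul_cancel₀ s hx
  linear_combination (-((n.choose (j + 1) : ℝ) * (s / (s + j + 1)) ^ t)) * hx'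

theorem stmt_12 (s : ℝ) (hs : 0 < s) (m n : ℕ) (hm : 1 ≤ m) (hn : 1 ≤ n) :
    ∑ k ∈ Finset.range (n + 1), (-1 : ℝ) ^ k * (n.choose k : ℝ) * (s / (s + k)) ^ m =
      ((n : ℝ) / s) * ∑ k ∈ Finset.range m, ∑ j ∈ Finset.range n,
        (-1 : ℝ) ^ j * ((n - 1).choose j : ℝ) * (s / (s + j + 1)) ^ (k + 1) := by
  rw [Finset.mul_sum]
  have hstep : ∀ k ∈ Finset.range m,
      ((n : ℝ) / s) * ∑ j ∈ Finset.range n,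
        (-1 : ℝ) ^ j * ((n - 1).choose j : ℝ) * (s / (s + j + 1)) ^ (k + 1)
      = (∑ i ∈ range (n + 1), (-1 : ℝ) ^ i * (n.choose i : ℝ) * (s / (s + i)) ^ (k + 1))
        - ∑ i ∈ range (n + 1), (-1 : ℝ) ^ i * (n.choose i : ℝ) * (s / (s + i)) ^ k := by
    intro k _
    exact (key12 s hs n hn k).symm
  rw [Finset.sum_congr rfl hstep, Finset.sum_range_sub
    (f := fun t => ∑ i ∈ range (n + 1), (-1 : ℝ) ^ i * (n.choose i : ℝ) * (s / (s + i)) ^ t)]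
  have hF0 : ∑ i ∈ range (n + 1), (-1 : ℝ) ^ i * (n.choose i : ℝ) * (s / (s + i)) ^ 0 = 0 := by
    have h := add_pow (-1 : ℝ) 1 n
    simp only [one_pow, mul_one, neg_add_cancel] at h
    rw [zero_pow (by omega : n ≠ 0)] at h
    simp only [pow_zero, mul_one]
    rw [← h]
  rw [hF0, sub_zero]
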